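/- arXiv:2211.10913 — 4 statements merged into one kernel-verified Lean document; each statement's English description precedes it below -/
import Mathlib

section
/- For any real numbers ρ⁻ < ρ⁺, the count φ(n; ρ⁻, ρ⁺) of integers m with nρ⁻ < m < nρ⁺ coprime to n is asymptotically equivalent to (ρ⁺ − ρ⁻)·φ(n) as n → ∞, i.e., the ratio φ(n; ρ⁻, ρ⁺)/((ρ⁺ − ρ⁻)φ(n)) tends to 1. -/
open Filter

open Nat ArithmeticFunction Finset ArithmeticFunction.Moebius ArithmeticFunction.zeta in
private lemma pI_moebius_sum_divisors (k : ℕ) :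
    ∑ d ∈ k.divisors, μ d = if k = 1 then 1 else 0 := by
  have h : (μ * ζ : ArithmeticFunction ℤ) k = (1 : ArithmeticFunction ℤ) k := by
    rw [moebius_mul_coe_zeta]
  rwa [coe_mul_zeta_apply, one_apply] at h

open Nat ArithmeticFunction Finset ArithmeticFunction.Moebius ArithmeticFunction.zeta in
private lemma pI_totient_moebius (n : ℕ) (hn : 0 < n) :
    ∑ d ∈ n.divisors, μ d • ((n / d : ℕ) : ℤ) = φ n := by
  have := (sum_eq_iff_sum_smul_moebius_eq (R := ℤ) (f := fun k => (φ k : ℤ))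
      (g := fun k => (k : ℤ))).mp
    (fun m _ => by exact_mod_cast Nat.sum_totient m) n hn
  rw [← this, Nat.sum_divisorsAntidiagonal (fun d e => μ d • (e : ℤ))]

open Nat ArithmeticFunction Finset ArithmeticFunction.Moebius ArithmeticFunction.zeta in
private lemma pI_sq_divisors_card (n : ℕ) (hn : n ≠ 0) :
    ({d ∈ n.divisors | Squarefree d} : Finset ℕ).card = 2 ^ n.primeFactors.card := by
  have h := Nat.divisors_filter_squarefree hn
  have h2 : ({d ∈ n.divisors | Squarefree d} : Finset ℕ).card =
      (UniqueFactorizationMonoid.normalizedFactors n).toFinset.powerset.card := by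
    rw [Finset.card, h, Multiset.card_map]; rfl
  rw [h2, Finset.card_powerset, Nat.factors_eq]
  simp

open Nat ArithmeticFunction Finset ArithmeticFunction.Moebius ArithmeticFunction.zeta in
private lemma pI_totient_lower (n : ℕ) : n ≤ 2 ^ n.primeFactors.card * φ n := by
  have key := Nat.totient_mul_prod_primeFactors n
  have h2 : ∏ p ∈ n.primeFactors, p ≤ ∏ p ∈ n.primeFactors, 2 * (p - 1) := by
    apply Finset.prod_le_prod (fun _ _ => Nat.zero_le _)
    intro p hp
    have := (Nat.prime_of_mem_primeFactors hp).two_le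
    omega
  rw [Finset.prod_mul_distrib, Finset.prod_const] at h2
  have hpos : 0 < ∏ p ∈ n.primeFactors, (p - 1) := by
    apply Finset.prod_pos; intro p hp
    have := (Nat.prime_of_mem_primeFactors hp).two_le; omega
  have h3 : n * ∏ p ∈ n.primeFactors, (p - 1) ≤
      (2 ^ n.primeFactors.card * φ n) * ∏ p ∈ n.primeFactors, (p - 1) := by
    calc n * ∏ p ∈ n.primeFactors, (p - 1) = φ n * ∏ p ∈ n.primeFactors, p := key.symm
    _ ≤ φ n * (2 ^ n.primeFactors.card * ∏ p ∈ n.primeFactors, (p - 1)) :=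
        Nat.mul_le_mul_left _ h2
    _ = (2 ^ n.primeFactors.card * φ n) * ∏ p ∈ n.primeFactors, (p - 1) := by ring
  exact Nat.le_of_mul_le_mul_right h3 hpos

open Nat ArithmeticFunction Finset ArithmeticFunction.Moebius ArithmeticFunction.zeta in
private lemma pI_sixteen_pow (n : ℕ) (hn : n ≠ 0) :
    16 ^ n.primeFactors.card ≤ 16 ^ 17 * n := by
  classical
  set S := n.primeFactors
  have hsplit : S.card = (S.filter (· < 17)).card + (S.filter (¬ · < 17)).card :=
    (Finset.card_filter_add_card_filter_not _).symm
  have h1 : (S.filter (· < 17)).card ≤ 17 := by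
    calc (S.filter (· < 17)).card ≤ (Finset.range 17).card := by
          apply Finset.card_le_card; intro x hx
          simp only [Finset.mem_filter] at hx; simpa using hx.2
    _ = 17 := by simp
  have h2 : 16 ^ (S.filter (¬ · < 17)).card ≤ ∏ p ∈ S.filter (¬ · < 17), p := by
    rw [← Finset.prod_const]
    apply Finset.prod_le_prod'; intro p hp
    simp only [Finset.mem_filter] at hp; omega
  have h3 : ∏ p ∈ S.filter (¬ · < 17), p ≤ n := by
    apply Nat.le_of_dvd (Nat.pos_of_ne_zero hn)
    exact dvd_trans (Finset.prod_dvd_prod_of_subset _ _ _ (Finset.filter_subset _ _))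
      (Nat.prod_primeFactors_dvd n)
  calc 16 ^ S.card = 16 ^ (S.filter (· < 17)).card * 16 ^ (S.filter (¬ · < 17)).card := by
        rw [hsplit, pow_add]
  _ ≤ 16 ^ 17 * n := Nat.mul_le_mul (Nat.pow_le_pow_right (by norm_num) h1) (h2.trans h3)

open Nat ArithmeticFunction Finset ArithmeticFunction.Moebius ArithmeticFunction.zeta in
private lemma pI_gcd_divisors (n : ℕ) (hn : n ≠ 0) (m : ℤ) :
    (Int.gcd m n).divisors = n.divisors.filter (fun d : ℕ => (d:ℤ) ∣ m) := by
  ext d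
  simp only [Nat.mem_divisors, Finset.mem_filter]
  constructor
  · rintro ⟨hd, hg⟩
    have h1 : (d:ℤ) ∣ m := (Int.natCast_dvd_natCast.mpr hd).trans (Int.gcd_dvd_left _ _)
    have h2 : (d:ℤ) ∣ (n:ℤ) := (Int.natCast_dvd_natCast.mpr hd).trans (Int.gcd_dvd_right _ _)
    exact ⟨⟨Int.ofNat_dvd.mp h2, hn⟩, h1⟩
  · rintro ⟨⟨hdn, _⟩, hdm⟩
    refine ⟨?_, fun hc => hn (by exact_mod_cast (Int.gcd_eq_zero_iff.mp hc).2)⟩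
    exact Int.natCast_dvd_natCast.mp (Int.dvd_coe_gcd hdm (Int.natCast_dvd_natCast.mpr hdn))

private lemma pI_interval_count (α β : ℝ) (hab : α < β) :
    |((Finset.Ioo ⌊α⌋ ⌈β⌉).card : ℝ) - (β - α)| ≤ 1 := by
  rw [Int.card_Ioo]
  have h1 : β ≤ ⌈β⌉ := Int.le_ceil β
  have h1' : (⌈β⌉:ℝ) < β + 1 := Int.ceil_lt_add_one β
  have h2 : (⌊α⌋ : ℝ) ≤ α := Int.floor_le α
  have h2' : α - 1 < ⌊α⌋ := Int.sub_one_lt_floor α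
  rcases le_or_gt (⌈β⌉ - ⌊α⌋ - 1) 0 with hle | hlt
  · rw [Int.toNat_of_nonpos hle]
    have h3 : (⌈β⌉ : ℝ) ≤ (⌊α⌋:ℝ) + 1 := by exact_mod_cast (by omega : (⌈β⌉:ℤ) ≤ ⌊α⌋ + 1)
    rw [abs_le]; constructor <;> push_cast <;> nlinarith
  · rw [show ((⌈β⌉ - ⌊α⌋ - 1).toNat : ℝ) = ((⌈β⌉:ℝ) - (⌊α⌋:ℝ) - 1) by
      rw [← Int.cast_natCast, Int.toNat_of_nonneg hlt.le]; push_cast; ring]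
    rw [abs_le]; constructor <;> nlinarith

private lemma pI_multiples_card (d : ℕ) (hd : 0 < d) (a b : ℝ) :
    ((Finset.Ioo ⌊a⌋ ⌈b⌉).filter (fun m => (d:ℤ) ∣ m)).card =
      (Finset.Ioo ⌊a/d⌋ ⌈b/d⌉).card := by
  have hd' : (0:ℝ) < d := by exact_mod_cast hd
  have hdz : (d:ℤ) ≠ 0 := by exact_mod_cast hd.ne'
  refine Finset.card_bij' (fun m _ => m / (d:ℤ)) (fun k _ => (d:ℤ) * k) ?_ ?_ ?_ ?_
  · intro m hm
    simp only [Finset.mem_filter, Finset.mem_Ioo] at hm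
    obtain ⟨⟨h1, h2⟩, k, rfl⟩ := hm
    have ha : a < (d:ℝ) * k := by
      have := Int.floor_lt.mp h1; push_cast at this ⊢; linarith
    have hb : (d:ℝ) * k < b := by
      have := Int.lt_ceil.mp h2; push_cast at this ⊢; linarith
    rw [Int.mul_ediv_cancel_left _ hdz]
    simp only [Finset.mem_Ioo]
    exact ⟨Int.floor_lt.mpr (by rw [div_lt_iff₀ hd']; linarith [mul_comm (d:ℝ) (k:ℝ)]),
      Int.lt_ceil.mpr (by rw [lt_div_iff₀ hd']; linarith [mul_comm (d:ℝ) (k:ℝ)])⟩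
  · intro k hk
    simp only [Finset.mem_Ioo] at hk
    have ha : a / d < k := Int.floor_lt.mp hk.1
    have hb : (k:ℝ) < b / d := Int.lt_ceil.mp hk.2
    simp only [Finset.mem_filter, Finset.mem_Ioo]
    refine ⟨⟨Int.floor_lt.mpr ?_, Int.lt_ceil.mpr ?_⟩, Dvd.intro _ rfl⟩
    · push_cast
      calc a = (a/d)*d := by field_simp
        _ < k * d := mul_lt_mul_of_pos_right ha hd'
        _ = (d:ℝ) * k := by ring
    · push_cast
      calc (d:ℝ) * k = k * d := by ring
        _ < (b/d) * d := mul_lt_mul_of_pos_right hb hd'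
        _ = b := by field_simp
  · intro m hm
    simp only [Finset.mem_filter] at hm
    obtain ⟨_, k, rfl⟩ := hm
    rw [Int.mul_ediv_cancel_left _ hdz]
  · intro k hk
    rw [Int.mul_ediv_cancel_left _ hdz]

open Nat ArithmeticFunction Finset ArithmeticFunction.Moebius ArithmeticFunction.zeta in
private lemma pI_key (n : ℕ) (hn : n ≠ 0) (a b : ℝ) (hab : a < b) :
    |(((Finset.Ioo ⌊a⌋ ⌈b⌉).filter (fun m => Int.gcd m n = 1)).card : ℝ)
      - (b - a) / n * φ n| ≤ 2 ^ n.primeFactors.card := by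
  classical
  have hn' : (0:ℝ) < n := by exact_mod_cast Nat.pos_of_ne_zero hn
  -- count = ∑_{d|n} μ d * N_d
  set N : ℕ → ℕ := fun d => ((Finset.Ioo ⌊a⌋ ⌈b⌉).filter (fun m => (d:ℤ) ∣ m)).card with hN
  have hcount : (((Finset.Ioo ⌊a⌋ ⌈b⌉).filter (fun m => Int.gcd m n = 1)).card : ℝ)
      = ∑ d ∈ n.divisors, (μ d : ℝ) * N d := by
    rw [Finset.card_filter]
    push_cast
    have step1 : ∀ m : ℤ, (if Int.gcd m n = 1 then (1:ℝ) else 0)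
        = ∑ d ∈ n.divisors, (if (d:ℤ) ∣ m then (μ d : ℝ) else 0) := by
      intro m
      have := pI_moebius_sum_divisors (Int.gcd m n)
      rw [pI_gcd_divisors n hn m, Finset.sum_filter] at this
      calc (if Int.gcd m n = 1 then (1:ℝ) else 0)
          = ((if Int.gcd m n = 1 then (1:ℤ) else 0) : ℝ) := by split <;> simp
        _ = ((∑ d ∈ n.divisors, if (d:ℤ) ∣ m then μ d else 0 : ℤ) : ℝ) := by rw [this]; split <;> simp
        _ = _ := by push_cast; rfl
    rw [Finset.sum_congr rfl (fun m _ => step1 m), Finset.sum_comm]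
    apply Finset.sum_congr rfl
    intro d _
    rw [← Finset.sum_filter, Finset.sum_const, hN]
    simp [mul_comm]
  -- target = ∑_{d|n} μ d * ((b-a)/d)
  have htarget : (b - a) / n * φ n = ∑ d ∈ n.divisors, (μ d : ℝ) * ((b - a) / d) := by
    have h1 : (φ n : ℝ) = ∑ d ∈ n.divisors, (μ d : ℝ) * ((n / d : ℕ) : ℝ) := by
      have := pI_totient_moebius n (Nat.pos_of_ne_zero hn)
      calc (φ n : ℝ) = ((∑ d ∈ n.divisors, μ d • ((n / d : ℕ) : ℤ) : ℤ) : ℝ) := by rw [this]; norm_cast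
        _ = _ := by push_cast [zsmul_eq_mul]; rfl
    rw [h1, Finset.mul_sum]
    apply Finset.sum_congr rfl
    intro d hd
    obtain ⟨hdvd, -⟩ := Nat.mem_divisors.mp hd
    have hd0 : d ≠ 0 := by rintro rfl; exact hn (zero_dvd_iff.mp hdvd)
    have hd0' : (0:ℝ) < d := by exact_mod_cast Nat.pos_of_ne_zero hd0
    have : ((n / d : ℕ) : ℝ) = (n : ℝ) / d := by
      rw [Nat.cast_div hdvd (by exact_mod_cast hd0)]
    rw [this]
    field_simp
  rw [hcount, htarget, ← Finset.sum_sub_distrib]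
  have hterm : ∀ d ∈ n.divisors,
      |(μ d : ℝ) * N d - (μ d : ℝ) * ((b - a) / d)| ≤ if Squarefree d then (1:ℝ) else 0 := by
    intro d hd
    obtain ⟨hdvd, -⟩ := Nat.mem_divisors.mp hd
    have hd0 : 0 < d := Nat.pos_of_ne_zero (by rintro rfl; exact hn (zero_dvd_iff.mp hdvd))
    have hd0' : (0:ℝ) < d := by exact_mod_cast hd0
    rw [← mul_sub, abs_mul]
    have hNd : |(N d : ℝ) - (b - a) / d| ≤ 1 := by
      rw [hN]
      dsimp only
      rw [pI_multiples_card d hd0 a b]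
      have : (b - a) / d = b / d - a / d := by ring
      rw [this]
      exact pI_interval_count (a / d) (b / d) (by gcongr)
    calc |(μ d : ℝ)| * |(N d : ℝ) - (b - a) / d| ≤ |(μ d : ℝ)| * 1 := by
          exact mul_le_mul_of_nonneg_left hNd (abs_nonneg _)
      _ = |(μ d : ℝ)| := mul_one _
      _ = if Squarefree d then (1:ℝ) else 0 := by
          have h := abs_moebius (n := d)
          calc |(μ d : ℝ)| = ((|μ d| : ℤ) : ℝ) := by push_cast; ring
            _ = _ := by rw [h]; split <;> simp
  calc |∑ d ∈ n.divisors, ((μ d : ℝ) * N d - (μ d : ℝ) * ((b - a) / d))|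
      ≤ ∑ d ∈ n.divisors, |(μ d : ℝ) * N d - (μ d : ℝ) * ((b - a) / d)| :=
        Finset.abs_sum_le_sum_abs _ _
    _ ≤ ∑ d ∈ n.divisors, (if Squarefree d then (1:ℝ) else 0) := Finset.sum_le_sum hterm
    _ = (({d ∈ n.divisors | Squarefree d} : Finset ℕ).card : ℝ) := by
        rw [Finset.sum_boole]
    _ = 2 ^ n.primeFactors.card := by rw [pI_sq_divisors_card n hn]; push_cast; ring

/-- φ(n; ρ⁻, ρ⁺): the number of integers `m` with `nρ⁻ < m < nρ⁺` coprime to `n`. -/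
noncomputable def phiInterval (n : ℕ) (ρm ρp : ℝ) : ℕ :=
  {m : ℤ | (n : ℝ) * ρm < (m : ℝ) ∧ (m : ℝ) < (n : ℝ) * ρp ∧ Int.gcd m n = 1}.ncard

theorem phiInterval_asymptotic (ρm ρp : ℝ) (h : ρm < ρp) :
    Tendsto (fun n : ℕ => (phiInterval n ρm ρp : ℝ) / ((ρp - ρm) * (Nat.totient n : ℝ)))
      atTop (nhds 1) := by
  have hρ : (0:ℝ) < ρp - ρm := sub_pos.mpr h
  set f : ℕ → ℝ := fun n => (phiInterval n ρm ρp : ℝ) / ((ρp - ρm) * (Nat.totient n : ℝ))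
    with hf
  set C : ℝ := 4 ^ 17 / (ρp - ρm) with hC
  -- the pointwise bound
  have hbound : ∀ n : ℕ, n ≠ 0 → ‖f n - 1‖ ≤ C / Real.sqrt n := by
    intro n hn
    have hn0 : (0:ℝ) < n := by exact_mod_cast Nat.pos_of_ne_zero hn
    have hφ : (0:ℝ) < Nat.totient n := by
      exact_mod_cast Nat.totient_pos.mpr (Nat.pos_of_ne_zero hn)
    set ω := n.primeFactors.card with hω
    -- identify phiInterval with the finset count
    have hset : (phiInterval n ρm ρp : ℝ)
        = (((Finset.Ioo ⌊(n:ℝ)*ρm⌋ ⌈(n:ℝ)*ρp⌉).filter (fun m => Int.gcd m n = 1)).card : ℝ) := by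
      congr 1
      rw [phiInterval, ← Set.ncard_coe_finset]
      congr 1
      ext m
      simp only [Set.mem_setOf_eq, Finset.coe_filter, Finset.mem_Ioo, Int.floor_lt, Int.lt_ceil]
      tauto
    have hab : (n:ℝ) * ρm < (n:ℝ) * ρp := by nlinarith
    have hkey := pI_key n hn ((n:ℝ) * ρm) ((n:ℝ) * ρp) hab
    have hsimp : ((n:ℝ) * ρp - (n:ℝ) * ρm) / n * (Nat.totient n : ℝ)
        = (ρp - ρm) * (Nat.totient n : ℝ) := by field_simp
    rw [hsimp] at hkey
    -- |f n - 1| = |count - (ρp-ρm)φ| / ((ρp-ρm)φ)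
    have hP : (0:ℝ) < (ρp - ρm) * (Nat.totient n : ℝ) := mul_pos hρ hφ
    have h1 : ‖f n - 1‖
        = |(phiInterval n ρm ρp : ℝ) - (ρp - ρm) * (Nat.totient n : ℝ)|
          / ((ρp - ρm) * (Nat.totient n : ℝ)) := by
      rw [hf]
      dsimp only
      rw [Real.norm_eq_abs,
        show (phiInterval n ρm ρp : ℝ) / ((ρp - ρm) * (Nat.totient n : ℝ)) - 1
          = ((phiInterval n ρm ρp : ℝ) - (ρp - ρm) * (Nat.totient n : ℝ))
            / ((ρp - ρm) * (Nat.totient n : ℝ)) by field_simp,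
        abs_div, abs_of_pos hP]
    rw [h1, hset]
    have h2 : |(((Finset.Ioo ⌊(n:ℝ)*ρm⌋ ⌈(n:ℝ)*ρp⌉).filter
          (fun m => Int.gcd m n = 1)).card : ℝ) - (ρp - ρm) * (Nat.totient n : ℝ)|
        ≤ (2:ℝ) ^ ω := by exact_mod_cast hkey
    -- chain of inequalities
    have h3 : (2:ℝ) ^ ω / ((ρp - ρm) * (Nat.totient n : ℝ)) ≤ C / Real.sqrt n := by
      have hsq : (0:ℝ) < Real.sqrt n := Real.sqrt_pos.mpr hn0
      have hA : (2:ℝ) ^ ω * n ≤ (4:ℝ) ^ ω * (Nat.totient n : ℝ) := by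
        have hcast : (n:ℝ) ≤ 2 ^ ω * (Nat.totient n : ℝ) := by exact_mod_cast pI_totient_lower n
        calc (2:ℝ) ^ ω * n ≤ 2 ^ ω * (2 ^ ω * (Nat.totient n : ℝ)) :=
              mul_le_mul_of_nonneg_left hcast (by positivity)
          _ = (4:ℝ) ^ ω * (Nat.totient n : ℝ) := by
              rw [show (4:ℝ) = 2 * 2 by norm_num, mul_pow]; ring
      have hB : (4:ℝ) ^ ω ≤ 4 ^ 17 * Real.sqrt n := by
        have h16 : (16:ℝ) ^ ω ≤ 16 ^ 17 * n := by exact_mod_cast pI_sixteen_pow n hn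
        have e1 : (4:ℝ) ^ ω = Real.sqrt ((16:ℝ) ^ ω) := by
          rw [show (16:ℝ) = (4:ℝ)^2 by norm_num, ← pow_mul, mul_comm 2 ω, pow_mul,
            Real.sqrt_sq (by positivity)]
        have e2 : Real.sqrt ((16:ℝ) ^ 17 * n) = 4 ^ 17 * Real.sqrt n := by
          rw [Real.sqrt_mul (by positivity),
            show (16:ℝ)^17 = ((4:ℝ)^17)^2 by norm_num, Real.sqrt_sq (by positivity)]
        rw [e1, ← e2]
        exact Real.sqrt_le_sqrt h16
      rw [div_le_div_iff₀ hP hsq]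
      have hCeq : C * ((ρp - ρm) * (Nat.totient n : ℝ)) = 4 ^ 17 * (Nat.totient n : ℝ) := by
        rw [hC]; field_simp
      rw [hCeq]
      have t1 : (2:ℝ) ^ ω * n ≤ 4 ^ 17 * Real.sqrt n * (Nat.totient n : ℝ) :=
        hA.trans (mul_le_mul_of_nonneg_right hB hφ.le)
      have t2 : (2:ℝ) ^ ω * Real.sqrt n * Real.sqrt n
          ≤ 4 ^ 17 * (Nat.totient n : ℝ) * Real.sqrt n := by
        calc (2:ℝ) ^ ω * Real.sqrt n * Real.sqrt n = 2 ^ ω * n := by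
              rw [mul_assoc, Real.mul_self_sqrt hn0.le]
          _ ≤ 4 ^ 17 * Real.sqrt n * (Nat.totient n : ℝ) := t1
          _ = 4 ^ 17 * (Nat.totient n : ℝ) * Real.sqrt n := by ring
      exact le_of_mul_le_mul_right t2 hsq
    calc |(((Finset.Ioo ⌊(n:ℝ)*ρm⌋ ⌈(n:ℝ)*ρp⌉).filter
          (fun m => Int.gcd m n = 1)).card : ℝ) - (ρp - ρm) * (Nat.totient n : ℝ)|
          / ((ρp - ρm) * (Nat.totient n : ℝ))
        ≤ (2:ℝ) ^ ω / ((ρp - ρm) * (Nat.totient n : ℝ)) := by gcongr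
      _ ≤ C / Real.sqrt n := h3
  -- limit of the bound
  have hsqrt : Tendsto (fun n : ℕ => Real.sqrt n) atTop atTop := by
    apply Filter.tendsto_atTop_atTop.mpr
    intro c
    refine ⟨⌈c^2⌉₊, fun n hn => ?_⟩
    have hcn : (c^2 : ℝ) ≤ n := le_trans (Nat.le_ceil _) (by exact_mod_cast hn)
    rcases le_or_gt c 0 with hc | hc
    · exact hc.trans (Real.sqrt_nonneg _)
    · calc c = Real.sqrt (c^2) := by rw [Real.sqrt_sq hc.le]
        _ ≤ Real.sqrt n := Real.sqrt_le_sqrt hcn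
  have hzero : Tendsto (fun n : ℕ => C / Real.sqrt n) atTop (nhds 0) :=
    Filter.Tendsto.div_atTop tendsto_const_nhds hsqrt
  have hdiff : Tendsto (fun n => f n - 1) atTop (nhds 0) := by
    apply squeeze_zero_norm' _ hzero
    filter_upwards [Filter.eventually_ne_atTop 0] with n hn
    exact hbound n hn
  have := hdiff.add_const 1
  simpa using this
end

section
/- For any real numbers ρ⁻ < ρ⁺, the number Φ(n; ρ⁻, ρ⁺) of irreducible fractions p/q with ρ⁻ < p/q < ρ⁺ and 1 ≤ q ≤ n is asymptotically equivalent to (3(ρ⁺ − ρ⁻)/π²)·n² as n → ∞. -/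
open Filter Real

open Finset ArithmeticFunction
open scoped ArithmeticFunction.Moebius

/-- Φ(n; ρ⁻, ρ⁺): the number of irreducible fractions `p/q` with `ρ⁻ < p/q < ρ⁺`
and denominator `q ≤ n`. -/
noncomputable def PhiInterval (n : ℕ) (ρm ρp : ℝ) : ℕ :=
  {q : ℚ | ρm < (q : ℝ) ∧ (q : ℝ) < ρp ∧ q.den ≤ n}.ncard

lemma moebius_sum_tendsto :
    Tendsto (fun n : ℕ => ∑ d ∈ Finset.Icc 1 n, (μ d : ℝ) / (d:ℝ)^2) atTop
      (nhds (6 / π^2)) := by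
  have h2 : (1:ℝ) < (2:ℂ).re := by norm_num
  have hpi : (π:ℂ)^2 ≠ 0 := by
    simp [Complex.ofReal_ne_zero, Real.pi_ne_zero]
  have hsum : LSeriesSummable (fun n => (μ n : ℂ)) 2 := LSeriesSummable_moebius_iff.mpr h2
  have hcast : ((6:ℂ)/(π:ℂ)^2) = ((6/π^2 : ℝ) : ℂ) := by push_cast; ring
  have hval : LSeries (fun n => (μ n : ℂ)) 2 = 6 / (π:ℂ)^2 := by
    have h1 := LSeries_one_mul_Lseries_moebius h2
    have hz : LSeries 1 (2:ℂ) = (π:ℂ)^2/6 := by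
      rw [LSeries_one_eq_riemannZeta h2, riemannZeta_two]
    rw [hz] at h1
    rw [eq_div_iff hpi]
    linear_combination 6 * h1
  have hH : HasSum (fun n => LSeries.term (fun n => (μ n : ℂ)) 2 n) (6 / (π:ℂ)^2) := by
    simpa [LSeriesHasSum, hval] using hsum.LSeriesHasSum
  have htend : Tendsto (fun n : ℕ => ∑ i ∈ Finset.range (n+1),
      LSeries.term (fun n => (μ n : ℂ)) 2 i) atTop (nhds (6 / (π:ℂ)^2)) :=
    hH.tendsto_sum_nat.comp (tendsto_add_atTop_nat 1)
  have key : ∀ n : ℕ, ∑ i ∈ Finset.range (n+1), LSeries.term (fun n => (μ n : ℂ)) 2 i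
      = Complex.ofReal (∑ d ∈ Finset.Icc 1 n, (μ d : ℝ) / (d:ℝ)^2) := by
    intro n
    rw [Complex.ofReal_sum]
    have hsub : Finset.Icc 1 n ⊆ Finset.range (n+1) := fun x hx => by
      simp only [Finset.mem_Icc] at hx; simp only [Finset.mem_range]; omega
    rw [← Finset.sum_subset hsub]
    · apply Finset.sum_congr rfl
      intro i hi
      simp only [Finset.mem_Icc] at hi
      rw [LSeries.term_of_ne_zero (by omega : i ≠ 0)]
      push_cast
      rw [Complex.cpow_ofNat]
    · intro x hmem hx
      simp only [Finset.mem_range] at hmem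
      simp only [Finset.mem_Icc, not_and, not_le] at hx
      have : x = 0 := by
        by_contra hne
        have h1 : 1 ≤ x := Nat.one_le_iff_ne_zero.mpr hne
        have := hx h1; omega
      simp [this, LSeries.term]
  simp only [key, hcast] at htend
  exact Filter.tendsto_ofReal_iff.mp htend


noncomputable def iooQ (ρm ρp : ℝ) (q : ℕ) : Finset ℤ :=
  Finset.Ioo ⌊(q:ℝ)*ρm⌋ ⌈(q:ℝ)*ρp⌉

noncomputable def cIoo (ρm ρp : ℝ) (q : ℕ) : Finset ℤ :=
  (iooQ ρm ρp q).filter fun p => p.gcd (q:ℤ) = 1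

lemma mem_iooQ {ρm ρp : ℝ} {q : ℕ} {p : ℤ} :
    p ∈ iooQ ρm ρp q ↔ (q:ℝ)*ρm < (p:ℝ) ∧ (p:ℝ) < (q:ℝ)*ρp := by
  simp [iooQ, Int.floor_lt, Int.lt_ceil, and_comm]

lemma mem_cIoo {ρm ρp : ℝ} {q : ℕ} {p : ℤ} :
    p ∈ cIoo ρm ρp q ↔ ((q:ℝ)*ρm < (p:ℝ) ∧ (p:ℝ) < (q:ℝ)*ρp) ∧ p.gcd (q:ℤ) = 1 := by
  simp [cIoo, mem_iooQ, Finset.mem_filter]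

/-- classify integer points by gcd with q -/
lemma iooQ_card_eq_sum (ρm ρp : ℝ) {q : ℕ} (hq : q ≠ 0) :
    (iooQ ρm ρp q).card = ∑ e ∈ q.divisors, (cIoo ρm ρp e).card := by
  classical
  rw [← Finset.card_sigma]
  apply Finset.card_bij'
    (i := fun p _ => (⟨q / p.gcd (q:ℤ), p / (p.gcd (q:ℤ) : ℤ)⟩ : (_ : ℕ) × ℤ))
    (j := fun x _ => ((q / x.1 : ℕ) : ℤ) * x.2)
  · -- hi : image in sigma
    intro p hp
    rw [mem_iooQ] at hp
    set d : ℕ := p.gcd (q:ℤ) with hd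
    have hd0 : 0 < d := Int.gcd_pos_iff.mpr (Or.inr (by exact_mod_cast hq))
    have hdq : d ∣ q := by
      have := Int.gcd_dvd_right (a := p) (b := (q:ℤ))
      exact_mod_cast this
    have hdp : (d:ℤ) ∣ p := Int.gcd_dvd_left _ _
    obtain ⟨e, he⟩ := hdq
    obtain ⟨c, hc⟩ := hdp
    have hdz : (d:ℤ) ≠ 0 := by exact_mod_cast hd0.ne'
    have hqd : q / d = e := by rw [he]; exact Nat.mul_div_cancel_left e hd0
    have hpd : p / (d:ℤ) = c := by rw [hc]; exact Int.mul_ediv_cancel_left c hdz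
    rw [Finset.mem_sigma]
    constructor
    · rw [Nat.mem_divisors, hqd]
      exact ⟨⟨d, by rw [he]; ring⟩, hq⟩
    · rw [hqd, hpd, mem_cIoo]
      have hdR : (0:ℝ) < (d:ℝ) := by exact_mod_cast hd0
      have hqe : (q:ℝ) = (d:ℝ) * (e:ℝ) := by exact_mod_cast congrArg (Nat.cast : ℕ → ℝ) he
      have hpc : (p:ℝ) = (d:ℝ) * (c:ℝ) := by exact_mod_cast congrArg (Int.cast : ℤ → ℝ) hc
      refine ⟨⟨?_, ?_⟩, ?_⟩
      · have := hp.1; rw [hqe, hpc] at this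
        nlinarith
      · have := hp.2; rw [hqe, hpc] at this
        nlinarith
      · have := Int.gcd_div_gcd_div_gcd (i := p) (j := (q:ℤ)) (by exact_mod_cast hd0)
        rw [hpd] at this
        rw [← this]
        congr 1
        rw [← hqd]
        exact (Int.natCast_ediv q d).symm
  · -- hj : backward maps into Ioo
    rintro ⟨e, p'⟩ hx
    rw [Finset.mem_sigma, Nat.mem_divisors] at hx
    obtain ⟨⟨⟨k, hk⟩, -⟩, hp'⟩ := hx
    rw [mem_cIoo] at hp'
    have he0 : 0 < e := Nat.pos_of_mem_divisors (by rw [Nat.mem_divisors]; exact ⟨⟨k, hk⟩, hq⟩)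
    have hqe : q / e = k := by rw [hk]; exact Nat.mul_div_cancel_left k he0
    have hk0 : 0 < k := by
      rcases Nat.eq_zero_or_pos k with h | h
      · exfalso; rw [h, mul_zero] at hk; exact hq hk
      · exact h
    rw [mem_iooQ, hqe]
    have hqR : (q:ℝ) = (e:ℝ) * (k:ℝ) := by exact_mod_cast congrArg (Nat.cast : ℕ → ℝ) hk
    have hkR : (0:ℝ) < (k:ℝ) := by exact_mod_cast hk0
    constructor
    · have := hp'.1.1
      push_cast
      rw [hqR]
      nlinarith
    · have := hp'.1.2
      push_cast
      rw [hqR]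
      nlinarith
  · -- left inverse
    intro p hp
    set d : ℕ := p.gcd (q:ℤ) with hd
    have hd0 : 0 < d := Int.gcd_pos_iff.mpr (Or.inr (by exact_mod_cast hq))
    have hdq : d ∣ q := by
      have := Int.gcd_dvd_right (a := p) (b := (q:ℤ))
      exact_mod_cast this
    have hdp : (d:ℤ) ∣ p := Int.gcd_dvd_left _ _
    dsimp only
    rw [Nat.div_div_self hdq hq]
    exact Int.mul_ediv_cancel' hdp
  · -- right inverse
    rintro ⟨e, p'⟩ hx
    rw [Finset.mem_sigma, Nat.mem_divisors] at hx
    obtain ⟨⟨⟨k, hk⟩, -⟩, hp'⟩ := hx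
    dsimp only at hp' ⊢
    rw [mem_cIoo] at hp'
    have he0 : 0 < e := by
      rcases Nat.eq_zero_or_pos e with h | h
      · exfalso; rw [h, zero_mul] at hk; exact hq hk
      · exact h
    have hqe : q / e = k := by rw [hk]; exact Nat.mul_div_cancel_left k he0
    have hk0 : 0 < k := by
      rcases Nat.eq_zero_or_pos k with h | h
      · exfalso; rw [h, mul_zero] at hk; exact hq hk
      · exact h
    have hgcd : ((k:ℤ) * p').gcd (q:ℤ) = k := by
      have hq' : (q:ℤ) = (k:ℤ) * (e:ℤ) := by
        have : q = k * e := by rw [hk]; ring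
        exact_mod_cast congrArg (Nat.cast : ℕ → ℤ) this
      rw [hq', Int.gcd_mul_left, hp'.2, mul_one, Int.natAbs_natCast]
    rw [hqe, hgcd]
    have hkz : ((k:ℤ)) ≠ 0 := by exact_mod_cast hk0.ne'
    congr 1
    · rw [hk, Nat.mul_comm e k]; exact Nat.mul_div_cancel_left e hk0
    · exact Int.mul_ediv_cancel_left p' hkz

/-- Reindexing: sum over k ≤ n and divisors d of k = sum over d ≤ n and e ≤ n/d. -/
lemma sum_divisors_reindex {M : Type*} [AddCommMonoid M] (n : ℕ) (F : ℕ → ℕ → M) :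
    ∑ k ∈ Finset.Icc 1 n, ∑ d ∈ k.divisors, F d (k / d)
      = ∑ d ∈ Finset.Icc 1 n, ∑ e ∈ Finset.Icc 1 (n / d), F d e := by
  classical
  rw [Finset.sum_sigma', Finset.sum_sigma']
  apply Finset.sum_bij'
    (i := fun x _ => (⟨x.2, x.1 / x.2⟩ : (_ : ℕ) × ℕ))
    (j := fun x _ => (⟨x.1 * x.2, x.1⟩ : (_ : ℕ) × ℕ))
  · rintro ⟨k, d⟩ hx
    rw [Finset.mem_sigma, Finset.mem_Icc, Nat.mem_divisors] at hx
    obtain ⟨⟨hk1, hkn⟩, ⟨c, hc⟩, hk0⟩ := hx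
    rw [Finset.mem_sigma, Finset.mem_Icc, Finset.mem_Icc]
    have hd0 : 0 < d := by
      rcases Nat.eq_zero_or_pos d with h | h
      · exfalso; rw [h, zero_mul] at hc; exact hk0 hc
      · exact h
    refine ⟨⟨hd0, le_trans (Nat.le_of_dvd (by omega) ⟨c, hc⟩) hkn⟩, ?_, ?_⟩
    · rw [Nat.one_le_div_iff hd0]
      exact Nat.le_of_dvd (by omega) ⟨c, hc⟩
    · exact Nat.div_le_div_right hkn
  · rintro ⟨d, e⟩ hx
    rw [Finset.mem_sigma, Finset.mem_Icc, Finset.mem_Icc] at hx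
    dsimp only at hx ⊢
    obtain ⟨⟨hd1, hdn⟩, he1, hen⟩ := hx
    rw [Finset.mem_sigma, Finset.mem_Icc, Nat.mem_divisors]
    dsimp only
    have hde : d * e ≤ n := by
      rw [mul_comm]; exact (Nat.le_div_iff_mul_le (by omega)).mp hen
    exact ⟨⟨Nat.mul_pos (by omega) (by omega), hde⟩, ⟨e, rfl⟩,
      Nat.mul_ne_zero (by omega) (by omega)⟩
  · rintro ⟨k, d⟩ hx
    rw [Finset.mem_sigma, Finset.mem_Icc, Nat.mem_divisors] at hx
    obtain ⟨⟨hk1, hkn⟩, hdvd, hk0⟩ := hx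
    dsimp only
    have : d * (k / d) = k := Nat.mul_div_cancel' hdvd
    simp [this]
  · rintro ⟨d, e⟩ hx
    rw [Finset.mem_sigma, Finset.mem_Icc, Finset.mem_Icc] at hx
    dsimp only at hx ⊢
    have hd0 : 0 < d := by omega
    have : d * e / d = e := Nat.mul_div_cancel_left e hd0
    simp [this]
  · rintro ⟨k, d⟩ _
    rfl


noncomputable def Ncount (ρm ρp : ℝ) (n : ℕ) : ℕ :=
  ∑ q ∈ Finset.Icc 1 n, (iooQ ρm ρp q).card

noncomputable def Pcount (ρm ρp : ℝ) (n : ℕ) : ℕ :=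
  ∑ q ∈ Finset.Icc 1 n, (cIoo ρm ρp q).card

lemma num_den_of_coprime {p : ℤ} {q : ℕ} (hq : q ≠ 0) (hco : p.gcd (q:ℤ) = 1) :
    ((p:ℚ)/(q:ℚ)).num = p ∧ ((p:ℚ)/(q:ℚ)).den = q := by
  have hco' : p.natAbs.Coprime q := by
    simpa [Int.gcd, Nat.Coprime] using hco
  have : ((p:ℚ)/(q:ℚ)) = Rat.mk' p q hq hco' := by
    rw [Rat.mk_eq_divInt, Rat.divInt_eq_div]
    norm_num
  rw [this]
  exact ⟨rfl, rfl⟩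

lemma phi_eq (ρm ρp : ℝ) (n : ℕ) : PhiInterval n ρm ρp = Pcount ρm ρp n := by
  classical
  set T : Finset ((_ : ℕ) × ℤ) := (Finset.Icc 1 n).sigma (fun q => cIoo ρm ρp q) with hT
  have hmemT : ∀ x : (_ : ℕ) × ℤ, x ∈ T ↔
      (1 ≤ x.1 ∧ x.1 ≤ n) ∧ ((x.1:ℝ)*ρm < (x.2:ℝ) ∧ (x.2:ℝ) < (x.1:ℝ)*ρp)
        ∧ x.2.gcd (x.1:ℤ) = 1 := by
    intro x
    simp [hT, Finset.mem_sigma, cIoo, mem_iooQ, Finset.mem_filter, and_assoc]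
  have hset : {q : ℚ | ρm < (q:ℝ) ∧ (q:ℝ) < ρp ∧ q.den ≤ n} =
      ↑(T.image (fun x : (_ : ℕ) × ℤ => (x.2 : ℚ) / (x.1 : ℚ))) := by
    ext r
    simp only [Finset.coe_image, Set.mem_image, Finset.mem_coe, Set.mem_setOf_eq]
    constructor
    · rintro ⟨h1, h2, h3⟩
      have hdpos : (0:ℝ) < (r.den : ℝ) := by exact_mod_cast r.pos
      have hcast : (r : ℝ) = (r.num : ℝ) / (r.den : ℝ) := by
        rw [Rat.cast_def]
      refine ⟨⟨r.den, r.num⟩, (hmemT _).mpr ⟨⟨r.pos, h3⟩, ⟨?_, ?_⟩, ?_⟩, ?_⟩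
      · rw [mul_comm]
        rw [hcast, lt_div_iff₀ hdpos] at h1
        exact h1
      · rw [mul_comm]
        rw [hcast, div_lt_iff₀ hdpos] at h2
        exact h2
      · exact r.reduced
      · push_cast
        exact Rat.num_div_den r
    · rintro ⟨⟨q, p⟩, hmem, rfl⟩
      rw [hmemT] at hmem
      dsimp only at hmem
      obtain ⟨⟨hq1, hqn⟩, ⟨hl, hr⟩, hco⟩ := hmem
      have hq0 : q ≠ 0 := by omega
      obtain ⟨hnum, hden⟩ := num_den_of_coprime hq0 hco
      have hqpos : (0:ℝ) < (q:ℝ) := by positivity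
      have hcast : (((p:ℚ)/(q:ℚ) : ℚ) : ℝ) = (p:ℝ)/(q:ℝ) := by push_cast; ring
      refine ⟨?_, ?_, ?_⟩
      · rw [hcast, lt_div_iff₀ hqpos, mul_comm]; exact hl
      · rw [hcast, div_lt_iff₀ hqpos, mul_comm]; exact hr
      · rw [hden]; exact hqn
  have hinj : Set.InjOn (fun x : (_ : ℕ) × ℤ => (x.2 : ℚ) / (x.1 : ℚ)) ↑T := by
    rintro ⟨q, p⟩ hx ⟨q', p'⟩ hy hxy
    simp only [Finset.mem_coe] at hx hy
    rw [hmemT] at hx hy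
    dsimp only at hx hy
    simp only at hxy
    have h1 := num_den_of_coprime (by omega : q ≠ 0) hx.2.2
    have h2 := num_den_of_coprime (by omega : q' ≠ 0) hy.2.2
    have hp : p = p' := by rw [← h1.1, ← h2.1, hxy]
    have hq : q = q' := by rw [← h1.2, ← h2.2, hxy]
    subst hp; subst hq; rfl
  rw [PhiInterval, hset, Set.ncard_coe_finset,
    Finset.card_image_of_injOn hinj, hT, Finset.card_sigma, Pcount]


lemma Ncount_eq (ρm ρp : ℝ) (n : ℕ) :
    Ncount ρm ρp n = ∑ d ∈ Finset.Icc 1 n, Pcount ρm ρp (n / d) := by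
  have h1 : Ncount ρm ρp n
      = ∑ k ∈ Finset.Icc 1 n, ∑ d ∈ k.divisors, (cIoo ρm ρp (k/d)).card := by
    rw [Ncount]
    apply Finset.sum_congr rfl
    intro q hq
    rw [Finset.mem_Icc] at hq
    rw [iooQ_card_eq_sum ρm ρp (by omega), ← Nat.sum_div_divisors]
  rw [h1, sum_divisors_reindex n (fun _ e => (cIoo ρm ρp e).card)]
  rfl

open ArithmeticFunction in
lemma pcount_inversion (ρm ρp : ℝ) {n : ℕ} (hn : 1 ≤ n) :
    (Pcount ρm ρp n : ℤ) = ∑ d ∈ Finset.Icc 1 n, μ d * (Ncount ρm ρp (n/d) : ℤ) := by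
  have hmu : ∀ k : ℕ, ∑ d ∈ k.divisors, (μ d : ℤ) = if k = 1 then 1 else 0 := by
    intro k
    have h := moebius_mul_coe_zeta
    rw [ArithmeticFunction.ext_iff] at h
    have hk := h k
    rw [coe_mul_zeta_apply, one_apply] at hk
    exact hk
  have h1 : ∀ d ∈ Finset.Icc 1 n, μ d * (Ncount ρm ρp (n/d) : ℤ)
      = ∑ e ∈ Finset.Icc 1 (n/d), μ d * (Pcount ρm ρp (n/(d*e)) : ℤ) := by
    intro d hd
    rw [Finset.mem_Icc] at hd
    rw [Ncount_eq, Nat.cast_sum, Finset.mul_sum]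
    apply Finset.sum_congr rfl
    intro e _
    rw [Nat.div_div_eq_div_mul]
  rw [Finset.sum_congr rfl h1,
    ← sum_divisors_reindex n (fun d e => (μ d : ℤ) * (Pcount ρm ρp (n/(d*e)) : ℤ))]
  have h2 : ∀ k ∈ Finset.Icc 1 n,
      ∑ d ∈ k.divisors, (μ d : ℤ) * (Pcount ρm ρp (n/(d*(k/d))) : ℤ)
      = (if k = 1 then 1 else 0) * (Pcount ρm ρp (n/k) : ℤ) := by
    intro k hk
    rw [← hmu k, Finset.sum_mul]
    apply Finset.sum_congr rfl
    intro d hd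
    rw [Nat.mem_divisors] at hd
    rw [Nat.mul_div_cancel' hd.1]
  rw [Finset.sum_congr rfl h2]
  rw [Finset.sum_eq_single_of_mem 1 (Finset.mem_Icc.mpr ⟨le_refl 1, hn⟩)]
  · simp
  · intro k _ hk
    simp [hk]

lemma iooQ_card_bound {ρm ρp : ℝ} (h : ρm < ρp) (q : ℕ) :
    |((iooQ ρm ρp q).card : ℝ) - (q:ℝ)*(ρp - ρm)| ≤ 1 := by
  set a := ⌊(q:ℝ)*ρm⌋ with ha
  set b := ⌈(q:ℝ)*ρp⌉ with hb
  have hcard : (iooQ ρm ρp q).card = (b - a - 1).toNat := by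
    rw [iooQ, Int.card_Ioo]
  have hcast : (((b - a - 1).toNat : ℕ) : ℝ) = max ((b:ℝ) - a - 1) 0 := by
    rw [← Int.cast_natCast (R := ℝ), Int.toNat_eq_max]
    push_cast
    rfl
  have h1 : (a:ℝ) ≤ (q:ℝ)*ρm := Int.floor_le _
  have h2 : (q:ℝ)*ρm - 1 < a := Int.sub_one_lt_floor _
  have h3 : (q:ℝ)*ρp ≤ b := Int.le_ceil _
  have h4 : (b:ℝ) < (q:ℝ)*ρp + 1 := Int.ceil_lt_add_one _
  have hL : 0 ≤ (q:ℝ)*(ρp - ρm) := by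
    have : (0:ℝ) ≤ q := Nat.cast_nonneg q
    nlinarith
  rw [hcard, hcast, abs_le]
  rcases max_cases ((b:ℝ) - a - 1) 0 with ⟨he, hc⟩ | ⟨he, hc⟩ <;> rw [he] <;>
    constructor <;> nlinarith

lemma Ncount_bound {ρm ρp : ℝ} (h : ρm < ρp) (n : ℕ) :
    |((Ncount ρm ρp n : ℕ) : ℝ) - (ρp - ρm) * ((n:ℝ)*((n:ℝ)+1))/2| ≤ n := by
  have hgauss : ∑ q ∈ Finset.Icc 1 n, (q:ℝ) = (n:ℝ)*((n:ℝ)+1)/2 := by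
    have h1 : ∑ q ∈ Finset.Icc 1 n, q = ∑ q ∈ Finset.range (n+1), q := by
      apply Finset.sum_subset
      · intro x hx
        rw [Finset.mem_Icc] at hx
        rw [Finset.mem_range]
        omega
      · intro x hx hnx
        rw [Finset.mem_range] at hx
        rw [Finset.mem_Icc] at hnx
        omega
    have h2 := Finset.sum_range_id_mul_two (n+1)
    have h3 : (∑ q ∈ Finset.Icc 1 n, q) * 2 = (n+1) * n := by
      rw [h1, h2]; simp
    have := congrArg (fun m : ℕ => (m:ℝ)) h3
    push_cast at this
    linarith
  have hdiff : ((Ncount ρm ρp n : ℕ) : ℝ) - (ρp - ρm) * ((n:ℝ)*((n:ℝ)+1))/2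
      = ∑ q ∈ Finset.Icc 1 n, (((iooQ ρm ρp q).card : ℝ) - (q:ℝ)*(ρp - ρm)) := by
    rw [Finset.sum_sub_distrib, Ncount, Nat.cast_sum, ← Finset.sum_mul, hgauss]
    ring
  rw [hdiff]
  calc |∑ q ∈ Finset.Icc 1 n, (((iooQ ρm ρp q).card : ℝ) - (q:ℝ)*(ρp - ρm))|
      ≤ ∑ q ∈ Finset.Icc 1 n, |((iooQ ρm ρp q).card : ℝ) - (q:ℝ)*(ρp - ρm)| :=
        Finset.abs_sum_le_sum_abs _ _
    _ ≤ ∑ q ∈ Finset.Icc 1 n, 1 := Finset.sum_le_sum (fun q _ => iooQ_card_bound h q)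
    _ ≤ n := by simp [Nat.card_Icc]


lemma harmonic_Icc (n : ℕ) :
    ∑ d ∈ Finset.Icc 1 n, (1:ℝ)/(d:ℝ) ≤ 1 + Real.log n := by
  have h1 : ∑ d ∈ Finset.Icc 1 n, (1:ℝ)/(d:ℝ) = ((harmonic n : ℚ) : ℝ) := by
    rw [harmonic]
    push_cast
    rw [← Finset.Ico_add_one_right_eq_Icc, Finset.sum_Ico_eq_sum_range]
    apply Finset.sum_congr (by norm_num)
    intro i _
    push_cast
    ring
  rw [h1]
  exact harmonic_le_one_add_log n

theorem PhiInterval_asymptotic (ρm ρp : ℝ) (h : ρm < ρp) :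
    Tendsto (fun n : ℕ => (PhiInterval n ρm ρp : ℝ) / (3 * (ρp - ρm) / π ^ 2 * (n : ℝ) ^ 2))
      atTop (nhds 1) := by
  set L : ℝ := ρp - ρm with hLdef
  clear_value L
  have hL : 0 < L := hLdef ▸ sub_pos.mpr h
  set S : ℕ → ℝ := fun n => ∑ d ∈ Finset.Icc 1 n, (μ d : ℝ) / (d:ℝ)^2 with hSdef
  have key : ∀ n : ℕ, 1 ≤ n →
      |(Pcount ρm ρp n : ℝ) - L / 2 * S n * (n:ℝ)^2| ≤ (1 + 2*L) * (n:ℝ) * (1 + Real.log n) := by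
    intro n hn
    have hinv : (Pcount ρm ρp n : ℝ)
        = ∑ d ∈ Finset.Icc 1 n, (μ d : ℝ) * (Ncount ρm ρp (n/d) : ℝ) := by
      have h2 := congrArg (fun z : ℤ => (z : ℝ)) (pcount_inversion ρm ρp hn)
      push_cast at h2
      exact h2
    have hmain : L / 2 * S n * (n:ℝ)^2
        = ∑ d ∈ Finset.Icc 1 n, (μ d : ℝ) * (L / 2 * ((n:ℝ)/(d:ℝ))^2) := by
      rw [hSdef]
      dsimp only
      rw [Finset.mul_sum, Finset.sum_mul]
      apply Finset.sum_congr rfl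
      intro d hd
      rw [Finset.mem_Icc] at hd
      have hd0 : (0:ℝ) < d := by exact_mod_cast hd.1
      field_simp
    rw [hinv, hmain, ← Finset.sum_sub_distrib]
    calc |∑ d ∈ Finset.Icc 1 n, ((μ d : ℝ) * (Ncount ρm ρp (n/d) : ℝ)
            - (μ d : ℝ) * (L / 2 * ((n:ℝ)/(d:ℝ))^2))|
        ≤ ∑ d ∈ Finset.Icc 1 n, |(μ d : ℝ)| *
            |(Ncount ρm ρp (n/d) : ℝ) - L / 2 * ((n:ℝ)/(d:ℝ))^2| := by
          refine (Finset.abs_sum_le_sum_abs _ _).trans (le_of_eq ?_)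
          apply Finset.sum_congr rfl
          intro d _
          rw [← mul_sub, abs_mul]
      _ ≤ ∑ d ∈ Finset.Icc 1 n, (1 + 2*L) * ((n:ℝ)/(d:ℝ)) := by
          apply Finset.sum_le_sum
          intro d hd
          rw [Finset.mem_Icc] at hd
          have hd0 : 0 < d := hd.1
          have hdR : (0:ℝ) < d := by exact_mod_cast hd0
          set m : ℕ := n / d with hm
          set x : ℝ := (n:ℝ)/(d:ℝ) with hx
          have hmx : (m:ℝ) ≤ x := Nat.cast_div_le
          have hx1 : 1 ≤ x := by
            rw [hx, le_div_iff₀ hdR, one_mul]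
            exact_mod_cast hd.2
          have hxm1 : x < (m:ℝ) + 1 := by
            rw [hx, div_lt_iff₀ hdR]
            have h2 := Nat.div_add_mod n d
            rw [← hm] at h2
            have h3 := Nat.mod_lt n hd0
            have h4 : d * (m+1) = d * m + d := Nat.mul_succ d m
            have h5 : n < d * (m + 1) := by rw [h4]; omega
            calc (n:ℝ) < ((d * (m+1) : ℕ) : ℝ) := by exact_mod_cast h5
              _ = ((m:ℝ)+1) * d := by push_cast; ring
          have hmu1 : |(μ d : ℝ)| ≤ 1 := by
            have := abs_moebius_le_one (n := d)
            exact_mod_cast this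
          have hNb := Ncount_bound h m
          rw [← hLdef] at hNb
          have hterm : |(Ncount ρm ρp m : ℝ) - L / 2 * x^2| ≤ (1 + 2*L) * x := by
            rw [abs_le] at hNb ⊢
            have hm0 : (0:ℝ) ≤ m := Nat.cast_nonneg m
            have hx2 : x^2 ≤ ((m:ℝ)+1)^2 := by nlinarith
            have hx2' : (m:ℝ)^2 ≤ x^2 := by nlinarith
            have hp1 : 0 ≤ L * (x - (m:ℝ)) := mul_nonneg hL.le (by linarith)
            have hp2 : L * x^2 ≤ L * (((m:ℝ)+1)^2) := mul_le_mul_of_nonneg_left hx2 hL.le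
            have hp3 : L * ((m:ℝ)^2) ≤ L * x^2 := mul_le_mul_of_nonneg_left hx2' hL.le
            have hp4 : 0 ≤ L * x := mul_nonneg hL.le (by linarith)
            have hp5 : 0 ≤ L * (x - 1) := mul_nonneg hL.le (by linarith)
            constructor
            · linarith [hNb.1, hp2, hp1, hp5, hp4, hmx]
            · linarith [hNb.2, hp3, hp1, hp4, hmx]
          calc |(μ d : ℝ)| * |(Ncount ρm ρp m : ℝ) - L / 2 * x^2|
              ≤ 1 * ((1 + 2*L) * x) :=
                mul_le_mul hmu1 hterm (abs_nonneg _) zero_le_one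
            _ = (1 + 2*L) * x := one_mul _
      _ = (1 + 2*L) * (n:ℝ) * ∑ d ∈ Finset.Icc 1 n, (1:ℝ)/(d:ℝ) := by
          rw [Finset.mul_sum]
          apply Finset.sum_congr rfl
          intro d _
          field_simp
      _ ≤ (1 + 2*L) * (n:ℝ) * (1 + Real.log n) := by
          apply mul_le_mul_of_nonneg_left (harmonic_Icc n)
          positivity
  set E : ℕ → ℝ := fun n => (Pcount ρm ρp n : ℝ) / (n:ℝ)^2 - L / 2 * S n with hEdef
  have hEbound : ∀ n : ℕ, 1 ≤ n → |E n| ≤ (1 + 2*L) * ((1 + Real.log n) / n) := by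
    intro n hn
    have hn0 : (0:ℝ) < n := by exact_mod_cast hn
    have hkn := key n hn
    rw [hEdef]
    dsimp only
    have heq : (Pcount ρm ρp n : ℝ) / (n:ℝ)^2 - L / 2 * S n
        = ((Pcount ρm ρp n : ℝ) - L / 2 * S n * (n:ℝ)^2) / (n:ℝ)^2 := by
      field_simp
    rw [heq, abs_div, abs_of_pos (by positivity : (0:ℝ) < (n:ℝ)^2)]
    rw [div_le_iff₀ (by positivity : (0:ℝ) < (n:ℝ)^2)]
    calc |(Pcount ρm ρp n : ℝ) - L / 2 * S n * (n:ℝ)^2|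
        ≤ (1 + 2*L) * (n:ℝ) * (1 + Real.log n) := hkn
      _ = (1 + 2*L) * ((1 + Real.log n) / n) * (n:ℝ)^2 := by
          field_simp
  have hEtend : Tendsto E atTop (nhds 0) := by
    have hb : Tendsto (fun x : ℝ => (1 + 2*L) * ((1 + Real.log x) / x)) atTop (nhds 0) := by
      have h1 : Tendsto (fun x : ℝ => x⁻¹) atTop (nhds (0:ℝ)) := tendsto_inv_atTop_zero
      have h2 := Real.isLittleO_log_id_atTop.tendsto_div_nhds_zero
      have h3 := h1.add h2
      rw [add_zero] at h3
      have h4 : Tendsto (fun x : ℝ => (1 + Real.log x) / x) atTop (nhds 0) := by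
        refine h3.congr' ?_
        filter_upwards [eventually_ne_atTop (0:ℝ)] with x hx
        simp only [id_eq]
        rw [add_div, one_div]
      have h5 := h4.const_mul (1 + 2*L)
      rwa [mul_zero] at h5
    have hbN : Tendsto (fun n : ℕ => (1 + 2*L) * ((1 + Real.log n) / n)) atTop (nhds 0) :=
      hb.comp tendsto_natCast_atTop_atTop
    apply squeeze_zero_norm' _ hbN
    filter_upwards [eventually_ge_atTop 1] with n hn
    exact hEbound n hn
  have hStend : Tendsto (fun n : ℕ => L / 2 * S n) atTop (nhds (L / 2 * (6 / π^2))) :=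
    moebius_sum_tendsto.const_mul (L/2)
  have hPtend : Tendsto (fun n : ℕ => (Pcount ρm ρp n : ℝ) / (n:ℝ)^2) atTop
      (nhds (3 * L / π^2)) := by
    have h6 := hStend.add hEtend
    rw [add_zero] at h6
    have h7 : (fun n : ℕ => L / 2 * S n + E n)
        = fun n : ℕ => (Pcount ρm ρp n : ℝ) / (n:ℝ)^2 := by
      funext n
      rw [hEdef]
      ring
    rw [h7] at h6
    have h8 : L / 2 * (6 / π^2) = 3 * L / π^2 := by
      field_simp
      ring
    rwa [h8] at h6
  have hT : (0:ℝ) < 3 * L / π^2 := by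
    have := Real.pi_pos
    positivity
  have hfinal : (fun n : ℕ => (PhiInterval n ρm ρp : ℝ) / (3 * L / π ^ 2 * (n:ℝ)^2))
      = fun n : ℕ => ((Pcount ρm ρp n : ℝ) / (n:ℝ)^2) / (3 * L / π^2) := by
    funext n
    rw [phi_eq]
    rw [div_div, mul_comm ((n:ℝ)^2) (3 * L / π^2)]
  rw [hfinal]
  have h9 := hPtend.div_const (3 * L / π^2)
  rwa [div_self hT.ne'] at h9
end

section
/- The totient summatory sum over integers coprime to a prime n₀ satisfies: ∑_{q ≤ n} φ(q) − ∑_{k ≤ ⌊n/n₀⌋} n₀·φ(k) ≤ ∑_{q ≤ n, gcd(q,n₀)=1} φ(q) ≤ ∑_{q ≤ n} φ(q) − ∑_{k ≤ ⌊n/n₀⌋} (n₀ − 1)·φ(k). -/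
open Finset

theorem totient_sum_coprime_bounds (n₀ : ℕ) (hn₀ : n₀.Prime) (n : ℕ) :
    ((∑ q ∈ Icc 1 n, Nat.totient q : ℤ) - ∑ k ∈ Icc 1 (n / n₀), (n₀ : ℤ) * Nat.totient k
      ≤ ∑ q ∈ (Icc 1 n).filter (fun q => Nat.Coprime q n₀), (Nat.totient q : ℤ)) ∧
    ((∑ q ∈ (Icc 1 n).filter (fun q => Nat.Coprime q n₀), (Nat.totient q : ℤ))
      ≤ (∑ q ∈ Icc 1 n, Nat.totient q : ℤ)
        - ∑ k ∈ Icc 1 (n / n₀), ((n₀ : ℤ) - 1) * Nat.totient k) := by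
  have hpos : 0 < n₀ := hn₀.pos
  have hsplit :
      (∑ q ∈ (Icc 1 n).filter (fun q => Nat.Coprime q n₀), (Nat.totient q : ℤ))
        + ∑ q ∈ (Icc 1 n).filter (fun q => ¬ Nat.Coprime q n₀), (Nat.totient q : ℤ)
        = ∑ q ∈ Icc 1 n, (Nat.totient q : ℤ) := sum_filter_add_sum_filter_not _ _ _
  have hbij :
      ∑ q ∈ (Icc 1 n).filter (fun q => ¬ Nat.Coprime q n₀), (Nat.totient q : ℤ)
        = ∑ k ∈ Icc 1 (n / n₀), (Nat.totient (n₀ * k) : ℤ) := by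
    symm
    apply Finset.sum_nbij' (i := fun k => n₀ * k) (j := fun q => q / n₀)
    · intro k hk
      simp only [mem_Icc, mem_filter] at hk ⊢
      refine ⟨⟨Nat.one_le_iff_ne_zero.2 ?_, ?_⟩, ?_⟩
      · have := hk.1; positivity
      · rw [mul_comm]; exact (Nat.le_div_iff_mul_le hpos).1 hk.2
      · rw [Nat.coprime_comm, hn₀.coprime_iff_not_dvd]
        simp [Dvd.intro k rfl]
    · intro q hq
      simp only [mem_Icc, mem_filter] at hq ⊢
      rw [Nat.coprime_comm, hn₀.coprime_iff_not_dvd, not_not] at hq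
      obtain ⟨⟨h1, h2⟩, c, rfl⟩ := hq
      rw [Nat.mul_div_cancel_left _ hpos]
      constructor
      · exact Nat.one_le_iff_ne_zero.2 (by rintro rfl; simp at h1)
      · exact Nat.le_div_iff_mul_le hpos |>.2 (by linarith [mul_comm n₀ c])
    · intro k hk; exact Nat.mul_div_cancel_left _ hpos
    · intro q hq
      simp only [mem_filter] at hq
      rw [Nat.coprime_comm, hn₀.coprime_iff_not_dvd, not_not] at hq
      exact Nat.mul_div_cancel' hq.2
    · intros; rfl
  have hlow : ∀ k ∈ Icc 1 (n / n₀), ((n₀ : ℤ) - 1) * Nat.totient k ≤ (Nat.totient (n₀ * k) : ℤ) := by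
    intro k hk
    by_cases hdvd : n₀ ∣ k
    · rw [Nat.totient_mul_of_prime_of_dvd hn₀ hdvd]
      push_cast
      nlinarith [Nat.totient_pos.2 (show 0 < k by simp [mem_Icc] at hk; omega), (hn₀.two_le : 2 ≤ n₀)]
    · rw [Nat.totient_mul ((hn₀.coprime_iff_not_dvd).2 hdvd), Nat.totient_prime hn₀]
      push_cast [Nat.cast_sub hn₀.one_le]; ring_nf; exact le_refl _
  have hhigh : ∀ k ∈ Icc 1 (n / n₀), (Nat.totient (n₀ * k) : ℤ) ≤ (n₀ : ℤ) * Nat.totient k := by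
    intro k hk
    by_cases hdvd : n₀ ∣ k
    · rw [Nat.totient_mul_of_prime_of_dvd hn₀ hdvd]; push_cast; rfl
    · rw [Nat.totient_mul ((hn₀.coprime_iff_not_dvd).2 hdvd), Nat.totient_prime hn₀]
      push_cast [Nat.cast_sub hn₀.one_le]
      nlinarith [Int.natCast_nonneg (Nat.totient k)]
  constructor
  · have := Finset.sum_le_sum hhigh
    rw [← hbij] at this
    linarith
  · have := Finset.sum_le_sum hlow
    rw [← hbij] at this
    linarith
end

section
/- The summatory totient function Φ(n) = φ(1) + ⋯ + φ(n) satisfies Φ(n) = (3/π²)n² + O(n log n) as n → ∞. -/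
open Finset Real Asymptotics Filter ArithmeticFunction
open scoped LSeries.notation Topology ArithmeticFunction.Moebius

lemma swap_sum (f : ℕ → ℕ → ℝ) (n : ℕ) :
    ∑ k ∈ Icc 1 n, ∑ x ∈ k.divisorsAntidiagonal, f x.1 x.2
      = ∑ d ∈ Icc 1 n, ∑ m ∈ Icc 1 (n / d), f d m := by
  rw [Finset.sum_sigma', Finset.sum_sigma']
  apply Finset.sum_nbij' (fun x => ⟨x.2.1, x.2.2⟩) (fun x => ⟨x.1 * x.2, x.1, x.2⟩)
  · rintro ⟨k, d, m⟩ h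
    simp only [Finset.mem_sigma, Finset.mem_Icc, Nat.mem_divisorsAntidiagonal] at h ⊢
    obtain ⟨⟨h1, h2⟩, h3, h4⟩ := h
    subst h3
    rcases Nat.eq_zero_or_pos d with rfl | hd; · simp at h1
    rcases Nat.eq_zero_or_pos m with rfl | hm; · simp at h1
    refine ⟨⟨hd, le_trans (Nat.le_mul_of_pos_right d hm) h2⟩, hm, ?_⟩
    rw [Nat.le_div_iff_mul_le hd, mul_comm]; exact h2
  · rintro ⟨d, m⟩ h
    simp only [Finset.mem_sigma, Finset.mem_Icc, Nat.mem_divisorsAntidiagonal] at h ⊢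
    obtain ⟨⟨h1, h2⟩, h3, h4⟩ := h
    have := (Nat.le_div_iff_mul_le (by omega : 0 < d)).mp h4
    refine ⟨⟨Nat.one_le_iff_ne_zero.mpr (by positivity), ?_⟩, trivial, by positivity⟩
    rw [mul_comm]; exact this
  · rintro ⟨k, d, m⟩ h
    simp only [Finset.mem_sigma, Nat.mem_divisorsAntidiagonal] at h
    simp [h.2.1]
  · rintro ⟨d, m⟩ h; rfl
  · rintro ⟨k, d, m⟩ h; rfl

lemma phi_eq_s9 (k : ℕ) (hk : 0 < k) :
    (Nat.totient k : ℝ) = ∑ x ∈ k.divisorsAntidiagonal, (μ x.1 : ℝ) * x.2 := by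
  refine ((sum_eq_iff_sum_mul_moebius_eq (R := ℝ)
    (f := fun n => (Nat.totient n : ℝ)) (g := fun n => (n : ℝ))).mp ?_ k hk).symm
  intro n hn
  exact_mod_cast congrArg (Nat.cast (R := ℝ)) (Nat.sum_totient n)

lemma gauss (N : ℕ) : ∑ m ∈ Icc 1 N, (m : ℝ) = N * (N + 1) / 2 := by
  induction N with
  | zero => simp
  | succ N ih => rw [Finset.sum_Icc_succ_top (by omega), ih]; push_cast; ring

lemma phi_sum_eq (n : ℕ) :
    ∑ k ∈ Icc 1 n, (Nat.totient k : ℝ)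
      = ∑ d ∈ Icc 1 n, (μ d : ℝ) * ((n / d : ℕ) * ((n / d : ℕ) + 1) / 2) := by
  rw [Finset.sum_congr rfl (fun k hk => phi_eq_s9 k (Finset.mem_Icc.mp hk).1),
    swap_sum (fun d m => (μ d : ℝ) * m) n]
  refine Finset.sum_congr rfl fun d _ => ?_
  rw [← Finset.mul_sum, gauss]

lemma summable_invsq : Summable (fun d : ℕ => ((d : ℝ) ^ 2)⁻¹) :=
  summable_nat_pow_inv.mpr one_lt_two

lemma abs_moe_le (d : ℕ) : |(μ d : ℝ)| ≤ 1 := by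
  rcases moebius_eq_or d with h | h | h <;> rw [h] <;> norm_num

lemma summable_moe : Summable (fun d : ℕ => (μ d : ℝ) / (d : ℝ) ^ 2) := by
  apply Summable.of_norm
  refine summable_invsq.of_nonneg_of_le (fun d => norm_nonneg _) (fun d => ?_)
  rcases Nat.eq_zero_or_pos d with rfl | hd
  · simp
  have hd2 : (0:ℝ) < (d:ℝ) ^ 2 := by exact_mod_cast pow_pos (Nat.cast_pos.mpr hd) 2
  rw [norm_div, Real.norm_of_nonneg hd2.le, ← one_div]
  gcongr
  simpa using abs_moe_le d

lemma moe_tsum : ∑' d : ℕ, (μ d : ℝ) / (d : ℝ) ^ 2 = 6 / π ^ 2 := by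
  have hm := LSeries_zeta_mul_Lseries_moebius (s := 2) (by norm_num)
  rw [LSeries_zeta_eq_riemannZeta (by norm_num), riemannZeta_two] at hm
  have hπ : (π : ℂ) ^ 2 ≠ 0 := by
    simpa using pow_ne_zero 2 (Complex.ofReal_ne_zero.mpr Real.pi_ne_zero)
  have hL : LSeries ↗μ 2 = 6 / (π : ℂ) ^ 2 := by
    field_simp at hm ⊢
    linear_combination hm
  have key : ((∑' d : ℕ, (μ d : ℝ) / (d : ℝ) ^ 2 : ℝ) : ℂ) = LSeries ↗μ 2 := by
    rw [Complex.ofReal_tsum]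
    refine tsum_congr fun n => ?_
    rcases Nat.eq_zero_or_pos n with rfl | hn
    · simp [LSeries.term]
    · rw [LSeries.term_of_ne_zero (by omega)]
      rw [show (2 : ℂ) = ((2 : ℕ) : ℂ) by norm_num, Complex.cpow_natCast]
      push_cast
      simp
  have := key.trans hL
  rw [show (6 / (π:ℂ)^2) = ((6 / π ^ 2 : ℝ) : ℂ) by push_cast; ring] at this
  exact_mod_cast this

lemma icc_sum_eq_range (f : ℕ → ℝ) (hf : f 0 = 0) (m : ℕ) :
    ∑ d ∈ Icc 1 m, f d = ∑ d ∈ range (m + 1), f d := by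
  refine Finset.sum_subset (fun x hx => ?_) (fun x hx hnx => ?_)
  · simp only [Finset.mem_Icc, Finset.mem_range] at hx ⊢; omega
  · simp only [Finset.mem_Icc, Finset.mem_range] at hx hnx
    have : x = 0 := by omega
    rw [this, hf]

set_option maxHeartbeats 800000 in
lemma tail_bound (n : ℕ) (hn : 0 < n) :
    |(6 / π ^ 2) - ∑ d ∈ Icc 1 n, (μ d : ℝ) / (d : ℝ) ^ 2| ≤ 1 / (n : ℝ) := by
  set f : ℕ → ℝ := fun d => (μ d : ℝ) / (d : ℝ) ^ 2 with hf
  have hf0 : f 0 = 0 := by simp [hf]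
  have hten : Tendsto (fun m => ∑ d ∈ Icc 1 m, f d) atTop (𝓝 (6 / π ^ 2)) := by
    have hs := summable_moe.hasSum
    rw [moe_tsum] at hs
    have h1 := hs.tendsto_sum_nat
    have h2 : Tendsto (fun m : ℕ => m + 1) atTop atTop := tendsto_add_atTop_nat 1
    refine (h1.comp h2).congr fun m => ?_
    rw [icc_sum_eq_range f hf0]; rfl
  have habs : Tendsto (fun m => |(∑ d ∈ Icc 1 m, f d) - ∑ d ∈ Icc 1 n, f d|) atTop
      (𝓝 |(6 / π ^ 2) - ∑ d ∈ Icc 1 n, f d|) :=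
    ((hten.sub tendsto_const_nhds).abs)
  refine le_of_tendsto habs (Filter.eventually_atTop.mpr ⟨n, fun m hm => ?_⟩)
  have hsplit : ∑ d ∈ Icc 1 m, f d = (∑ d ∈ Icc 1 n, f d) + ∑ d ∈ Ioc n m, f d := by
    rw [show Icc 1 n = Ioc 0 n by rfl, show Icc 1 m = Ioc 0 m by rfl,
      Finset.sum_Ioc_consecutive _ (Nat.zero_le n) hm]
  rw [hsplit, add_sub_cancel_left]
  calc |∑ d ∈ Ioc n m, f d| ≤ ∑ d ∈ Ioc n m, |f d| := Finset.abs_sum_le_sum_abs _ _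
    _ ≤ ∑ d ∈ Ioc n m, ((d : ℝ) ^ 2)⁻¹ := by
        refine Finset.sum_le_sum fun d hd => ?_
        simp only [Finset.mem_Ioc] at hd
        have hd2 : (0:ℝ) < (d:ℝ) ^ 2 := by
          exact_mod_cast pow_pos (Nat.cast_pos.mpr (by omega : 0 < d)) 2
        rw [hf, abs_div, abs_of_nonneg hd2.le, ← one_div]
        gcongr
        simpa using abs_moe_le d
    _ ≤ 1 / n - 1 / m := by
        simpa [one_div] using sum_Ioc_inv_sq_le_sub (α := ℝ) (by omega : n ≠ 0) hm
    _ ≤ 1 / n := by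
        have : (0:ℝ) ≤ 1 / m := by positivity
        linarith

lemma harm_le (n : ℕ) : ∑ d ∈ Icc 1 n, 1 / (d : ℝ) ≤ 1 + Real.log n := by
  have h := harmonic_le_one_add_log n
  rw [harmonic_eq_sum_Icc] at h
  push_cast at h
  simpa [one_div] using h

lemma floor_facts (n d : ℕ) (hd : 0 < d) :
    ((n / d : ℕ) : ℝ) ≤ (n : ℝ) / d ∧ (n : ℝ) / d < ((n / d : ℕ) : ℝ) + 1 := by
  refine ⟨Nat.cast_div_le, ?_⟩
  rw [div_lt_iff₀ (by exact_mod_cast hd)]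
  have h : n < (n / d + 1) * d := by
    have h1 := Nat.div_add_mod n d
    have h2 := Nat.mod_lt n hd
    nlinarith
  exact_mod_cast h

theorem totient_summatory_asymptotic :
    (fun n : ℕ => (∑ k ∈ Icc 1 n, (Nat.totient k : ℝ)) - 3 / π ^ 2 * (n : ℝ) ^ 2)
      =O[atTop] (fun n : ℕ => (n : ℝ) * Real.log n) := by
  rw [isBigO_iff]
  refine ⟨4, Filter.eventually_atTop.mpr ⟨3, fun n hn => ?_⟩⟩
  have hn0 : 0 < n := by omega
  have hn3 : (3 : ℝ) ≤ (n : ℝ) := by exact_mod_cast hn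
  have hL1 : (1 : ℝ) ≤ Real.log n := by
    rw [Real.le_log_iff_exp_le (by positivity)]
    calc Real.exp 1 ≤ 2.7182818286 := (Real.exp_one_lt_d9).le
      _ ≤ (n : ℝ) := by linarith
  set c : ℝ := 6 / π ^ 2 with hc
  set T1 : ℝ := ∑ d ∈ Icc 1 n, (μ d : ℝ) * (((n / d : ℕ) : ℝ) ^ 2 - ((n : ℝ) / d) ^ 2) with hT1def
  set T2 : ℝ := ∑ d ∈ Icc 1 n, (μ d : ℝ) * ((n / d : ℕ) : ℝ) with hT2def
  set T3 : ℝ := (n : ℝ) ^ 2 * ((∑ d ∈ Icc 1 n, (μ d : ℝ) / (d : ℝ) ^ 2) - c) with hT3def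
  have h3 : T3 = (∑ d ∈ Icc 1 n, (μ d : ℝ) * ((n : ℝ) / d) ^ 2) - c * (n : ℝ) ^ 2 := by
    rw [hT3def, mul_sub, Finset.mul_sum]
    congr 1
    · exact Finset.sum_congr rfl fun d _ => by rw [div_pow]; ring
    · ring
  have hsum : T1 + T2 + (∑ d ∈ Icc 1 n, (μ d : ℝ) * ((n : ℝ) / d) ^ 2)
      = 2 * ∑ d ∈ Icc 1 n, (μ d : ℝ) * (((n / d : ℕ) : ℝ) * (((n / d : ℕ) : ℝ) + 1) / 2) := by
    rw [hT1def, hT2def, Finset.mul_sum, ← Finset.sum_add_distrib, ← Finset.sum_add_distrib]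
    exact Finset.sum_congr rfl fun d _ => by ring
  have key : (∑ k ∈ Icc 1 n, (Nat.totient k : ℝ)) - 3 / π ^ 2 * (n : ℝ) ^ 2
      = (T1 + T2 + T3) / 2 := by
    rw [phi_sum_eq n]
    have hc2 : 3 / π ^ 2 * (n : ℝ) ^ 2 = c * (n : ℝ) ^ 2 / 2 := by rw [hc]; ring
    linarith [hsum, h3]
  -- bounds
  have hH := harm_le n
  have bound1 : |T1| ≤ 2 * (n : ℝ) * (1 + Real.log n) := by
    calc |T1| ≤ ∑ d ∈ Icc 1 n, |(μ d : ℝ) * (((n / d : ℕ) : ℝ) ^ 2 - ((n : ℝ) / d) ^ 2)| :=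
          Finset.abs_sum_le_sum_abs _ _
      _ ≤ ∑ d ∈ Icc 1 n, 2 * (n : ℝ) * (1 / d) := by
          refine Finset.sum_le_sum fun d hd => ?_
          have hd1 : 0 < d := (Finset.mem_Icc.mp hd).1
          obtain ⟨hx, hr⟩ := floor_facts n d hd1
          have hx0 : (0:ℝ) ≤ ((n / d : ℕ) : ℝ) := Nat.cast_nonneg _
          rw [abs_mul]
          have h1 : |(μ d : ℝ)| ≤ 1 := abs_moe_le d
          have h2 : |(((n / d : ℕ) : ℝ) ^ 2 - ((n : ℝ) / d) ^ 2)| ≤ 2 * ((n : ℝ) / d) := by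
            rw [abs_sub_comm, abs_of_nonneg (by nlinarith)]
            nlinarith
          calc |(μ d : ℝ)| * |(((n / d : ℕ) : ℝ) ^ 2 - ((n : ℝ) / d) ^ 2)|
              ≤ 1 * (2 * ((n : ℝ) / d)) := by
                apply mul_le_mul h1 h2 (abs_nonneg _) zero_le_one
            _ = 2 * (n : ℝ) * (1 / d) := by ring
      _ = 2 * (n : ℝ) * ∑ d ∈ Icc 1 n, 1 / (d : ℝ) := by rw [Finset.mul_sum]
      _ ≤ 2 * (n : ℝ) * (1 + Real.log n) := by
          apply mul_le_mul_of_nonneg_left hH (by positivity)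
  have bound2 : |T2| ≤ (n : ℝ) * (1 + Real.log n) := by
    calc |T2| ≤ ∑ d ∈ Icc 1 n, |(μ d : ℝ) * ((n / d : ℕ) : ℝ)| := Finset.abs_sum_le_sum_abs _ _
      _ ≤ ∑ d ∈ Icc 1 n, (n : ℝ) * (1 / d) := by
          refine Finset.sum_le_sum fun d hd => ?_
          have hd1 : 0 < d := (Finset.mem_Icc.mp hd).1
          obtain ⟨hx, _⟩ := floor_facts n d hd1
          rw [abs_mul, abs_of_nonneg (show (0:ℝ) ≤ ((n / d : ℕ) : ℝ) from Nat.cast_nonneg _)]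
          calc |(μ d : ℝ)| * ((n / d : ℕ) : ℝ) ≤ 1 * ((n : ℝ) / d) := by
                apply mul_le_mul (abs_moe_le d) hx (Nat.cast_nonneg _) zero_le_one
            _ = (n : ℝ) * (1 / d) := by ring
      _ = (n : ℝ) * ∑ d ∈ Icc 1 n, 1 / (d : ℝ) := by rw [Finset.mul_sum]
      _ ≤ (n : ℝ) * (1 + Real.log n) := by
          apply mul_le_mul_of_nonneg_left hH (by positivity)
  have bound3 : |T3| ≤ (n : ℝ) := by
    rw [hT3def, abs_mul, abs_of_nonneg (by positivity : (0:ℝ) ≤ (n:ℝ)^2), abs_sub_comm]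
    calc (n : ℝ) ^ 2 * |c - ∑ d ∈ Icc 1 n, (μ d : ℝ) / (d : ℝ) ^ 2|
        ≤ (n : ℝ) ^ 2 * (1 / n) := by
          apply mul_le_mul_of_nonneg_left (tail_bound n hn0) (by positivity)
      _ = (n : ℝ) := by field_simp
  rw [key]
  have hnL : (n : ℝ) ≤ (n : ℝ) * Real.log n := by
    nlinarith
  have hnn : (0 : ℝ) ≤ (n : ℝ) * Real.log n := by linarith
  rw [Real.norm_eq_abs, Real.norm_eq_abs, abs_of_nonneg hnn]
  have habs : |(T1 + T2 + T3) / 2| ≤ (|T1| + |T2| + |T3|) / 2 := by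
    rw [abs_div, abs_two]
    gcongr
    exact (abs_add_le _ _).trans (by gcongr; exact abs_add_le _ _)
  have hLn : (0:ℝ) ≤ Real.log n := by linarith
  nlinarith [habs, bound1, bound2, bound3, hnL, hLn, hn3]
end
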